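/- Let G be the group with presentation ⟨ρ, τ, σ | (ρτ)² = 1, σ² = 1, ρτ = τρ, σρ = τσ⟩. Then the subgroup H of G generated by ρ², σ, and ρτ has index 2 in G, and H is isomorphic to the direct product D∞ × ℤ/2ℤ of the infinite dihedral group with a cyclic group of order 2. (In Example 6.8, H is the quasi-automorphism group of the cluster algebra of the annulus with two marked points on each boundary component, realized as the kernel of the parity map G → ℤ/2ℤ.) -/

import Mathlib

namespace ClusterModularAnnulus

/-- Relators of the presentation `⟨ρ, τ, σ | (ρτ)² = 1, σ² = 1, ρτ = τρ, σρ = τσ⟩`,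
with `ρ, τ, σ` the generators `0, 1, 2`. -/
def annulusRels : Set (FreeGroup (Fin 3)) :=
  { (FreeGroup.of 0 * FreeGroup.of 1) ^ 2,
    (FreeGroup.of 2) ^ 2,
    FreeGroup.of 0 * FreeGroup.of 1 * (FreeGroup.of 0)⁻¹ * (FreeGroup.of 1)⁻¹,
    FreeGroup.of 2 * FreeGroup.of 0 * (FreeGroup.of 1 * FreeGroup.of 2)⁻¹ }

/-- Relators of the infinite dihedral group `D∞ = ⟨r, s | s² = 1, (sr)² = 1⟩`, with
`r, s` the generators `0, 1`. -/
def dihedralInfRels : Set (FreeGroup (Fin 2)) :=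
  { (FreeGroup.of 1) ^ 2, (FreeGroup.of 1 * FreeGroup.of 0) ^ 2 }

/-- The cluster modular group of the annulus with two marked points on each boundary
component (Example 6.8). -/
abbrev G := PresentedGroup annulusRels

/-- The infinite dihedral group. -/
abbrev Dinf := PresentedGroup dihedralInfRels

def ρ : G := PresentedGroup.of 0
def τ : G := PresentedGroup.of 1
def σ : G := PresentedGroup.of 2

lemma rel_of_mem {r : FreeGroup (Fin 3)} (h : r ∈ annulusRels) :
    PresentedGroup.mk annulusRels r = 1 :=
  (QuotientGroup.eq_one_iff _).mpr (Subgroup.subset_normalClosure h)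

lemma hz2 : (ρ * τ) ^ 2 = 1 := by
  have := rel_of_mem (r := (FreeGroup.of 0 * FreeGroup.of 1) ^ 2) (by simp [annulusRels])
  simpa [ρ, τ, PresentedGroup.of, map_mul, map_pow] using this

lemma hs2 : σ * σ = 1 := by
  have := rel_of_mem (r := (FreeGroup.of 2) ^ 2) (by simp [annulusRels])
  simpa [σ, PresentedGroup.of, map_pow, sq] using this

lemma hcomm : ρ * τ = τ * ρ := by
  have := rel_of_mem (r := FreeGroup.of 0 * FreeGroup.of 1 * (FreeGroup.of 0)⁻¹ *
    (FreeGroup.of 1)⁻¹) (by simp [annulusRels])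
  simp only [map_mul, map_inv] at this
  have h3 : ρ * τ * ρ⁻¹ = τ := mul_inv_eq_one.mp this
  exact mul_inv_eq_iff_eq_mul.mp h3

lemma hsr : σ * ρ = τ * σ := by
  have := rel_of_mem (r := FreeGroup.of 2 * FreeGroup.of 0 *
    (FreeGroup.of 1 * FreeGroup.of 2)⁻¹) (by simp [annulusRels])
  simp only [map_mul, map_inv] at this
  have h2 : σ * ρ * (τ * σ)⁻¹ = 1 := by
    simpa [mul_assoc, σ, ρ, τ, PresentedGroup.of] using this
  exact mul_inv_eq_one.mp h2

/-- `z = ρτ`. -/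
local notation "z" => ρ * τ

lemma hzz : z * z = 1 := by have := hz2; rwa [sq] at this

lemma hσρσ : σ * ρ * σ = τ := by
  rw [hsr, mul_assoc, hs2, mul_one]

lemma hστ : σ * τ = ρ * σ := by
  have : σ * (σ * ρ * σ) = σ * τ := by rw [hσρσ]
  rw [← this, ← mul_assoc, ← mul_assoc, hs2, one_mul]

lemma hzρ : z * ρ = ρ * z := by
  rw [mul_assoc, ← hcomm]

lemma hzτ : z * τ = τ * z := by
  conv_lhs => rw [hcomm]
  rw [mul_assoc]

lemma hzσ : z * σ = σ * z := by
  calc ρ * τ * σ = ρ * (τ * σ) := by group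
    _ = ρ * (σ * ρ) := by rw [hsr]
    _ = (ρ * σ) * ρ := by group
    _ = (σ * τ) * ρ := by rw [hστ]
    _ = σ * (τ * ρ) := by group
    _ = σ * (ρ * τ) := by rw [hcomm]

/-- z is central. -/
lemma z_comm (g : G) : g * z = z * g := by
  have : g ∈ Subgroup.centralizer {z} := by
    refine PresentedGroup.generated_by _ _ (fun j => ?_) g
    rw [Subgroup.mem_centralizer_iff]
    rintro y ⟨rfl⟩
    fin_cases j
    · exact hzρ
    · exact hzτ
    · exact hzσ
  have := Subgroup.mem_centralizer_iff.mp this z rfl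
  exact this.symm

lemma hρσ : ρ * σ * ρ⁻¹ = σ * (ρ ^ 2)⁻¹ * z := by
  have h1 : ρ * σ = σ * τ := hστ.symm
  have h2 : σ * (ρ ^ 2)⁻¹ * z * ρ = σ * τ := by
    calc σ * (ρ ^ 2)⁻¹ * (ρ * τ) * ρ = σ * ρ⁻¹ * (τ * ρ) := by group
      _ = σ * ρ⁻¹ * (ρ * τ) := by rw [hcomm]
      _ = σ * τ := by group
  calc ρ * σ * ρ⁻¹ = (σ * τ) * ρ⁻¹ := by rw [h1]
    _ = (σ * (ρ ^ 2)⁻¹ * z * ρ) * ρ⁻¹ := by rw [h2]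
    _ = σ * (ρ ^ 2)⁻¹ * z := by group

def Hgens : Set G := {ρ ^ 2, σ, ρ * τ}

abbrev H : Subgroup G := Subgroup.closure Hgens

lemma hρ2H : ρ ^ 2 ∈ H := Subgroup.subset_closure (by simp [Hgens])
lemma hσH : σ ∈ H := Subgroup.subset_closure (by simp [Hgens])
lemma hzH : z ∈ H := Subgroup.subset_closure (by simp [Hgens])

lemma conj_mem (h : G) (hh : h ∈ H) : ρ * h * ρ⁻¹ ∈ H := by
  induction hh using Subgroup.closure_induction with
  | mem x hx =>
    rcases hx with rfl | rfl | rfl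
    · have e : ρ * ρ ^ 2 * ρ⁻¹ = ρ ^ 2 := by group
      rw [e]; exact hρ2H
    · rw [hρσ]
      exact H.mul_mem (H.mul_mem hσH (H.inv_mem hρ2H)) hzH
    · rw [z_comm ρ, mul_inv_cancel_right]
      exact hzH
  | one => simpa using H.one_mem
  | mul x y hx hy ihx ihy =>
    have : ρ * (x * y) * ρ⁻¹ = (ρ * x * ρ⁻¹) * (ρ * y * ρ⁻¹) := by group
    rw [this]; exact H.mul_mem ihx ihy
  | inv x hx ihx =>
    have : ρ * x⁻¹ * ρ⁻¹ = (ρ * x * ρ⁻¹)⁻¹ := by group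
    rw [this]; exact H.inv_mem ihx


lemma conj_mem' (h : G) (hh : h ∈ H) : ρ⁻¹ * h * ρ ∈ H := by
  have e : ρ⁻¹ * h * ρ = (ρ ^ 2)⁻¹ * (ρ * h * ρ⁻¹) * ρ ^ 2 := by group
  rw [e]
  exact H.mul_mem (H.mul_mem (H.inv_mem hρ2H) (conj_mem h hh)) hρ2H

/-- The parity homomorphism. -/
def π : G →* Multiplicative (ZMod 2) :=
  PresentedGroup.toGroup (f := ![Multiplicative.ofAdd 1, Multiplicative.ofAdd 1, 1])
    (by
      intro r hr
      rcases hr with rfl | rfl | rfl | rfl <;>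
        simp only [map_mul, map_pow, map_inv, FreeGroup.lift_apply_of] <;> decide)

lemma πρ : π ρ = Multiplicative.ofAdd 1 := PresentedGroup.toGroup.of _
lemma πτ : π τ = Multiplicative.ofAdd 1 := PresentedGroup.toGroup.of _
lemma πσ : π σ = 1 := PresentedGroup.toGroup.of _

lemma H_le_ker : H ≤ π.ker := by
  rw [Subgroup.closure_le]
  rintro x (rfl | rfl | rfl) <;>
    simp only [SetLike.mem_coe, MonoidHom.mem_ker, map_mul, map_pow, πρ, πτ, πσ] <;> decide

lemma cover (g : G) : g ∈ H ∨ ρ⁻¹ * g ∈ H := by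
  refine PresentedGroup.generated_by _
    { carrier := {g | g ∈ H ∨ ρ⁻¹ * g ∈ H}
      one_mem' := Or.inl H.one_mem
      mul_mem' := ?_
      inv_mem' := ?_ } (fun j => ?_) g
  · rintro a b (ha | ha) (hb | hb)
    · exact Or.inl (H.mul_mem ha hb)
    · refine Or.inr ?_
      have e : ρ⁻¹ * (a * b) = (ρ⁻¹ * a * ρ) * (ρ⁻¹ * b) := by group
      rw [e]; exact H.mul_mem (conj_mem' a ha) hb
    · refine Or.inr ?_
      have e : ρ⁻¹ * (a * b) = (ρ⁻¹ * a) * b := by group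
      rw [e]; exact H.mul_mem ha hb
    · refine Or.inl ?_
      have e : a * b = (ρ ^ 2) * (ρ⁻¹ * (ρ⁻¹ * a) * ρ) * (ρ⁻¹ * b) := by group
      rw [e]; exact H.mul_mem (H.mul_mem hρ2H (conj_mem' _ ha)) hb
  · rintro a (ha | ha)
    · exact Or.inl (H.inv_mem ha)
    · refine Or.inr ?_
      have e : ρ⁻¹ * a⁻¹ = (ρ⁻¹ * (ρ⁻¹ * a)⁻¹ * ρ) * (ρ ^ 2)⁻¹ := by group
      rw [e]; exact H.mul_mem (conj_mem' _ (H.inv_mem ha)) (H.inv_mem hρ2H)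
  · fin_cases j
    · refine Or.inr ?_
      show ρ⁻¹ * ρ ∈ H
      rw [inv_mul_cancel]; exact H.one_mem
    · refine Or.inr ?_
      show ρ⁻¹ * τ ∈ H
      have e : ρ⁻¹ * τ = (ρ ^ 2)⁻¹ * (ρ * τ) := by group
      rw [e]; exact H.mul_mem (H.inv_mem hρ2H) hzH
    · exact Or.inl hσH

lemma ker_le_H : π.ker ≤ H := by
  intro g hg
  rcases cover g with h | h
  · exact h
  · exfalso
    have h1 : π (ρ⁻¹ * g) = 1 := H_le_ker h
    rw [map_mul, map_inv, πρ, MonoidHom.mem_ker.mp hg, mul_one] at h1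
    exact absurd h1 (by decide)

lemma H_eq_ker : H = π.ker := le_antisymm H_le_ker ker_le_H

lemma π_surj : Function.Surjective π := by
  intro x
  have hx : x = 1 ∨ x = Multiplicative.ofAdd 1 := by revert x; decide
  rcases hx with rfl | rfl
  · exact ⟨1, map_one π⟩
  · exact ⟨ρ, πρ⟩

lemma index_two : H.index = 2 := by
  rw [H_eq_ker, Subgroup.index_ker, MonoidHom.range_eq_top.mpr π_surj]
  simp only [Subgroup.card_top]
  rw [Nat.card_eq_fintype_card]
  rfl


/-! ### The infinite dihedral group -/

def R : Dinf := PresentedGroup.of 0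
def S : Dinf := PresentedGroup.of 1

lemma drel_of_mem {r : FreeGroup (Fin 2)} (h : r ∈ dihedralInfRels) :
    PresentedGroup.mk dihedralInfRels r = 1 :=
  (QuotientGroup.eq_one_iff _).mpr (Subgroup.subset_normalClosure h)

lemma hS2 : S * S = 1 := by
  have := drel_of_mem (r := (FreeGroup.of 1) ^ 2) (by simp [dihedralInfRels])
  simpa [S, PresentedGroup.of, map_pow, sq] using this

lemma hSR2 : (S * R) * (S * R) = 1 := by
  have := drel_of_mem (r := (FreeGroup.of 1 * FreeGroup.of 0) ^ 2) (by simp [dihedralInfRels])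
  simpa [S, R, PresentedGroup.of, map_pow, map_mul, sq] using this

lemma hSinv : S⁻¹ = S := by
  rw [inv_eq_iff_mul_eq_one, hS2]

lemma hconjR : S * R * S⁻¹ = R⁻¹ := by
  rw [hSinv]
  have h4 : S * R * S * R = 1 := by rw [mul_assoc (S * R) S R]; exact hSR2
  exact mul_eq_one_iff_eq_inv.mp h4

lemma conjR_zpow (i : ℤ) : S * R ^ i * S⁻¹ = R ^ (-i) := by
  have : (MulAut.conj S) R = R⁻¹ := by simp [MulAut.conj_apply, hconjR]
  calc S * R ^ i * S⁻¹ = (MulAut.conj S) (R ^ i) := by simp [MulAut.conj_apply]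
    _ = ((MulAut.conj S) R) ^ i := map_zpow _ _ _
    _ = (R⁻¹) ^ i := by rw [this]
    _ = R ^ (-i) := by group

lemma RpowS (i : ℤ) : R ^ i * S = S * R ^ (-i) := by
  have := conjR_zpow i
  rw [hSinv] at this
  calc R ^ i * S = S * (S * R ^ i * S) := by
        rw [← mul_assoc, ← mul_assoc, hS2, one_mul]
    _ = S * R ^ (-i) := by rw [this]

/-- Cast `ZMod 0` to `ℤ` (they are definitionally equal). -/
def zi (i : ZMod 0) : ℤ := i

lemma zi_add (i j : ZMod 0) : zi (i + j) = zi i + zi j := rfl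
lemma zi_sub (i j : ZMod 0) : zi (i - j) = zi i - zi j := rfl
lemma zi_zero : zi 0 = 0 := rfl

/-- The inverse homomorphism `DihedralGroup 0 →* Dinf`. -/
def toDinf : DihedralGroup 0 →* Dinf where
  toFun x := match x with
    | .r i => R ^ (zi i)
    | .sr i => S * R ^ (zi i)
  map_one' := by
    show R ^ (zi 0) = 1
    rw [zi_zero, zpow_zero]
  map_mul' := by
    rintro (i | i) (j | j)
    · show R ^ zi (i + j) = R ^ zi i * R ^ zi j
      rw [zi_add, zpow_add]
    · show S * R ^ zi (j - i) = R ^ zi i * (S * R ^ zi j)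
      rw [← mul_assoc, RpowS, zi_sub, mul_assoc, ← zpow_add]
      ring_nf
    · show S * R ^ zi (i + j) = S * R ^ zi i * R ^ zi j
      rw [zi_add, zpow_add, mul_assoc]
    · show R ^ zi (j - i) = S * R ^ zi i * (S * R ^ zi j)
      rw [mul_assoc, ← mul_assoc (R ^ zi i), RpowS, ← mul_assoc, ← mul_assoc, hS2,
        one_mul, ← zpow_add, zi_sub]
      ring_nf

/-- The homomorphism `Dinf →* DihedralGroup 0`. -/
def dih : Dinf →* DihedralGroup 0 :=
  PresentedGroup.toGroup (f := ![DihedralGroup.r 1, DihedralGroup.sr 0])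
    (by
      intro r hr
      rcases hr with rfl | rfl <;>
        simp [map_pow, map_mul, FreeGroup.lift_apply_of, sq, DihedralGroup.sr_mul_r,
          DihedralGroup.sr_mul_sr, DihedralGroup.r_mul_sr, DihedralGroup.r_mul_r,
          sub_self, zero_add])

lemma dihR : dih R = DihedralGroup.r 1 := PresentedGroup.toGroup.of _
lemma dihS : dih S = DihedralGroup.sr 0 := PresentedGroup.toGroup.of _

lemma r_one_zpow (i : ℤ) : (DihedralGroup.r 1 : DihedralGroup 0) ^ i = DihedralGroup.r i := by
  induction i using Int.induction_on with
  | zero => rw [zpow_zero, DihedralGroup.one_def]; rfl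
  | succ n ih =>
    rw [zpow_add_one, ih]; exact DihedralGroup.r_mul_r _ _
  | pred n ih =>
    rw [zpow_sub_one, ih]
    have : (DihedralGroup.r 1 : DihedralGroup 0)⁻¹ = DihedralGroup.r (-1) := rfl
    rw [this]
    exact DihedralGroup.r_mul_r _ _

lemma dih_toDinf (x : DihedralGroup 0) : dih (toDinf x) = x := by
  rcases x with i | i
  · show dih (R ^ zi i) = _
    rw [map_zpow, dihR, r_one_zpow]
    rfl
  · show dih (S * R ^ zi i) = _
    rw [map_mul, map_zpow, dihR, dihS, r_one_zpow]
    show DihedralGroup.sr 0 * DihedralGroup.r i = _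
    rw [DihedralGroup.sr_mul_r, zero_add]

lemma toDinf_dih (a : Dinf) : toDinf (dih a) = a := by
  have h : toDinf.comp dih = MonoidHom.id Dinf := by
    apply PresentedGroup.ext
    intro x
    fin_cases x
    · show toDinf (dih R) = R
      rw [dihR]
      show R ^ zi 1 = R
      rw [show zi 1 = 1 from rfl, zpow_one]
    · show toDinf (dih S) = S
      rw [dihS]
      show S * R ^ zi 0 = S
      rw [zi_zero, zpow_zero, mul_one]
  calc toDinf (dih a) = toDinf.comp dih a := rfl
    _ = a := by rw [h]; rfl


/-! ### Auxiliary homomorphisms out of `G` -/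

/-- Detecting homomorphism into `ZMod 4` (abelianization component). -/
def μ : G →* Multiplicative (ZMod 4) :=
  PresentedGroup.toGroup (f := ![Multiplicative.ofAdd 1, Multiplicative.ofAdd 1, 1])
    (by
      intro r hr
      rcases hr with rfl | rfl | rfl | rfl <;>
        simp only [map_mul, map_pow, map_inv, FreeGroup.lift_apply_of] <;> decide)

lemma μρ : μ ρ = Multiplicative.ofAdd 1 := PresentedGroup.toGroup.of _
lemma μτ : μ τ = Multiplicative.ofAdd 1 := PresentedGroup.toGroup.of _

lemma μz : μ (ρ * τ) = Multiplicative.ofAdd 2 := by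
  rw [map_mul, μρ, μτ]
  decide

lemma z_ne_one : ρ * τ ≠ 1 := by
  intro h
  have := congrArg μ h
  rw [μz, map_one] at this
  exact absurd this (by decide)

lemma r_inv (i : ZMod 0) : (DihedralGroup.r i)⁻¹ = DihedralGroup.r (-i) := rfl
lemma sr_inv (i : ZMod 0) : (DihedralGroup.sr i)⁻¹ = DihedralGroup.sr i := rfl

/-- Detecting homomorphism into the concrete infinite dihedral group. -/
def ν : G →* DihedralGroup 0 :=
  PresentedGroup.toGroup
    (f := ![DihedralGroup.r 1, DihedralGroup.r (-1), DihedralGroup.sr 0])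
    (by
      intro r hr
      rcases hr with rfl | rfl | rfl | rfl <;>
        simp [map_mul, map_pow, map_inv, FreeGroup.lift_apply_of, sq, DihedralGroup.r_mul_r,
          DihedralGroup.r_mul_sr, DihedralGroup.sr_mul_r, DihedralGroup.sr_mul_sr,
          r_inv, sr_inv, sub_self, zero_add])

lemma νρ : ν ρ = DihedralGroup.r 1 := PresentedGroup.toGroup.of _
lemma ντ : ν τ = DihedralGroup.r (-1) := PresentedGroup.toGroup.of _
lemma νσ : ν σ = DihedralGroup.sr 0 := PresentedGroup.toGroup.of _

lemma νz : ν (ρ * τ) = 1 := by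
  rw [map_mul, νρ, ντ, DihedralGroup.r_mul_r, DihedralGroup.one_def]
  norm_num

/-! ### The embedding of `Dinf × ZMod 2` onto `H` -/

lemma hσρ2 : (σ * ρ ^ 2) * (σ * ρ ^ 2) = 1 := by
  have e1 : (σ * ρ ^ 2) * (σ * ρ ^ 2) = σ * ρ * (σ * σ) * ρ * σ * (ρ * ρ) := by
    rw [hs2, sq]; group
  have e2 : σ * ρ * (σ * σ) * ρ * σ * (ρ * ρ) = (σ * ρ * σ) * (σ * ρ * σ) * (ρ * ρ) := by
    group
  rw [e1, e2, hσρσ]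
  have e3 : τ * τ * (ρ * ρ) = τ * (τ * ρ) * ρ := by group
  rw [e3, ← hcomm]
  have e4 : τ * (ρ * τ) * ρ = (τ * ρ) * (τ * ρ) := by group
  rw [e4, ← hcomm]
  exact hzz

def φ₁ : Dinf →* G :=
  PresentedGroup.toGroup (f := ![ρ ^ 2, σ])
    (by
      intro r hr
      rcases hr with rfl | rfl
      · simpa [map_pow, FreeGroup.lift_apply_of, sq] using hs2
      · simpa [map_pow, map_mul, FreeGroup.lift_apply_of, sq] using hσρ2)

lemma φ₁R : φ₁ R = ρ ^ 2 := PresentedGroup.toGroup.of _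
lemma φ₁S : φ₁ S = σ := PresentedGroup.toGroup.of _

def φ₂ : Multiplicative (ZMod 2) →* G where
  toFun b := (ρ * τ) ^ (Multiplicative.toAdd b).val
  map_one' := by norm_num
  map_mul' a b := by
    have key : ∀ x y : ZMod 2, (ρ * τ) ^ (x + y).val = (ρ * τ) ^ x.val * (ρ * τ) ^ y.val := by
      have h0 : ∀ x : ZMod 2, x = 0 ∨ x = 1 := by decide
      intro x y
      rcases h0 x with rfl | rfl <;> rcases h0 y with rfl | rfl
      · norm_num
      · rw [show ((0 : ZMod 2) + 1) = 1 from rfl, show ((0 : ZMod 2)).val = 0 from rfl,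
          pow_zero, one_mul]
      · rw [show ((1 : ZMod 2) + 0) = 1 from rfl, show ((0 : ZMod 2)).val = 0 from rfl,
          pow_zero, mul_one]
      · rw [show ((1 : ZMod 2) + 1) = 0 from rfl, show ((0 : ZMod 2)).val = 0 from rfl,
          show ((1 : ZMod 2)).val = 1 from rfl, pow_zero, pow_one]
        exact hzz.symm
    exact key _ _

lemma φ₂_apply (b : Multiplicative (ZMod 2)) :
    φ₂ b = (ρ * τ) ^ (Multiplicative.toAdd b).val := rfl

lemma comm_φ (a : Dinf) (b : Multiplicative (ZMod 2)) : Commute (φ₁ a) (φ₂ b) := by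
  rw [φ₂_apply]
  exact (Commute.pow_right (z_comm (φ₁ a)) _)

def φ : Dinf × Multiplicative (ZMod 2) →* G := φ₁.noncommCoprod φ₂ comm_φ

lemma φ_apply (a : Dinf) (b : Multiplicative (ZMod 2)) : φ (a, b) = φ₁ a * φ₂ b := rfl

lemma φ₁_mem (a : Dinf) : φ₁ a ∈ H := by
  refine PresentedGroup.generated_by _ (H.comap φ₁) (fun j => ?_) a
  fin_cases j
  · show φ₁ R ∈ H
    rw [φ₁R]; exact hρ2H
  · show φ₁ S ∈ H
    rw [φ₁S]; exact hσH

lemma φ_range : φ.range = H := by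
  apply le_antisymm
  · rintro x ⟨⟨a, b⟩, rfl⟩
    rw [φ_apply]
    exact H.mul_mem (φ₁_mem a) (H.pow_mem hzH _)
  · rw [Subgroup.closure_le]
    rintro x (rfl | rfl | rfl)
    · exact ⟨(R, 1), by rw [φ_apply, φ₁R, φ₂_apply]; norm_num⟩
    · exact ⟨(S, 1), by rw [φ_apply, φ₁S, φ₂_apply]; norm_num⟩
    · refine ⟨(1, Multiplicative.ofAdd 1), ?_⟩
      rw [φ_apply, map_one, φ₂_apply, one_mul]
      exact pow_one (ρ * τ)

lemma two_mul_ne (i : ZMod 0) (h : (2 : ℤ) * zi i = 0) : i = 0 := by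
  have : zi i = 0 := by omega
  exact this

lemma φ_inj : Function.Injective φ := by
  rw [injective_iff_map_eq_one]
  rintro ⟨a, b⟩ hab
  rw [φ_apply] at hab
  -- first component
  have ha : a = 1 := by
    have hν : ν (φ₁ a) = 1 := by
      have : ν (φ₁ a) * ν (φ₂ b) = 1 := by rw [← map_mul, hab, map_one]
      have hb1 : ν (φ₂ b) = 1 := by
        rw [φ₂_apply, map_pow, νz, one_pow]
      rwa [hb1, mul_one] at this
    have hx := toDinf_dih a
    rcases hd : dih a with i | i
    · rw [hd] at hx
      have : ν (φ₁ (toDinf (DihedralGroup.r i))) = 1 := by rw [hx]; exact hν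
      have e : ν (φ₁ (toDinf (DihedralGroup.r i))) = DihedralGroup.r (2 * zi i) := by
        show ν (φ₁ (R ^ zi i)) = _
        rw [map_zpow, map_zpow, φ₁R, map_pow, νρ,
          show (DihedralGroup.r 1 : DihedralGroup 0) ^ (2 : ℕ) = DihedralGroup.r 2 by
            rw [sq, DihedralGroup.r_mul_r]; norm_num,
          show (DihedralGroup.r 2 : DihedralGroup 0) = DihedralGroup.r 1 ^ (2 : ℤ) by
            rw [zpow_two, DihedralGroup.r_mul_r]; norm_num,
          ← zpow_mul, r_one_zpow]
        rfl
      rw [e, DihedralGroup.one_def] at this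
      have h2 : (2 : ℤ) * zi i = 0 := by
        have := DihedralGroup.r.inj this
        exact this
      have : i = 0 := two_mul_ne i h2
      rw [this] at hx
      rw [← hx]
      show R ^ zi 0 = 1
      rw [zi_zero, zpow_zero]
    · exfalso
      rw [hd] at hx
      have : ν (φ₁ (toDinf (DihedralGroup.sr i))) = 1 := by rw [hx]; exact hν
      have e : ν (φ₁ (toDinf (DihedralGroup.sr i))) = DihedralGroup.sr (2 * zi i) := by
        show ν (φ₁ (S * R ^ zi i)) = _
        rw [map_mul, map_mul, map_zpow, map_zpow, φ₁R, φ₁S, map_pow, νρ, νσ,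
          show (DihedralGroup.r 1 : DihedralGroup 0) ^ (2 : ℕ) = DihedralGroup.r 2 by
            rw [sq, DihedralGroup.r_mul_r]; norm_num,
          show (DihedralGroup.r 2 : DihedralGroup 0) = DihedralGroup.r 1 ^ (2 : ℤ) by
            rw [zpow_two, DihedralGroup.r_mul_r]; norm_num,
          ← zpow_mul, r_one_zpow]
        show DihedralGroup.sr 0 * DihedralGroup.r ((2 : ZMod 0) * i) = _
        rw [DihedralGroup.sr_mul_r, zero_add]
        rfl
      rw [e, DihedralGroup.one_def] at this
      exact absurd this (fun h => by cases h)
  -- second component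
  have hb : b = 1 := by
    rw [ha, map_one, one_mul, φ₂_apply] at hab
    have h0 : ∀ c : ZMod 2, c = 0 ∨ c = 1 := by decide
    rcases h0 (Multiplicative.toAdd b) with h | h
    · calc b = Multiplicative.ofAdd (Multiplicative.toAdd b) := rfl
        _ = 1 := by rw [h]; rfl
    · exfalso
      rw [h, show ((1 : ZMod 2)).val = 1 from rfl, pow_one] at hab
      exact z_ne_one hab
  rw [ha, hb]
  rfl

noncomputable def finalIso : H ≃* Dinf × Multiplicative (ZMod 2) :=
  (MulEquiv.subgroupCongr φ_range).symm.trans (MonoidHom.ofInjective φ_inj).symm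

/-- the quasi-automorphism group in Example 6.8.
The subgroup `H` of `G = ⟨ρ, τ, σ | (ρτ)² = σ² = 1, ρτ = τρ, σρ = τσ⟩` generated by
`ρ², σ` and `ρτ` has index `2` in `G`, and `H ≅ D∞ × ℤ/2ℤ`. -/
theorem quasiAut_subgroup_index_two_and_structure :
    (Subgroup.closure {ρ ^ 2, σ, ρ * τ} : Subgroup G).index = 2 ∧
    Nonempty ((Subgroup.closure {ρ ^ 2, σ, ρ * τ} : Subgroup G) ≃*
      Dinf × Multiplicative (ZMod 2)) :=
  ⟨index_two, ⟨finalIso⟩⟩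

end ClusterModularAnnulus
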